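/- Let n₁ ≥ 1, K = 0, and let (λ₁,…,λ_{n₁}, μ₁,…,μ_{n₁}) be a real-analytic solution of the system (ODE) on an open interval I with τ ≡ 0 on I. Then there exist real constants a₁,…,a_{n₁} such that for each i, either (a) there is a constant cᵢ ∈ ℝ with t + cᵢ ≠ 0 on I, μᵢ(t) = −1/(t + cᵢ) and λᵢ(t) = aᵢ/(t + cᵢ), or (b) μᵢ ≡ 0 and λᵢ ≡ aᵢ. Moreover, for every index k, the sum of aᵢ over all indices i for which μᵢ and μ_k coincide as functions on I equals 0. -/

import Mathlib

open scoped Classical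

lemma zero_at_closure {f : ℝ → ℝ} {Z : Set ℝ} {b r : ℝ} (hb : b ∈ closure Z)
    (hZ : ∀ t ∈ Z, f t = r) (hc : ContinuousAt f b) : f b = r := by
  have hne : (nhdsWithin b Z).NeBot := mem_closure_iff_nhdsWithin_neBot.1 hb
  have h1 : Filter.Tendsto f (nhdsWithin b Z) (nhds (f b)) := hc.continuousWithinAt
  have h2 : Filter.Tendsto f (nhdsWithin b Z) (nhds r) := by
    refine Filter.Tendsto.congr' ?_ tendsto_const_nhds
    filter_upwards [self_mem_nhdsWithin] with t ht using (hZ t ht).symm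
  exact tendsto_nhds_unique h1 h2

lemma aux_const {s : Set ℝ} (hs : Convex ℝ s) {f : ℝ → ℝ}
    (hf : ∀ t ∈ s, HasDerivAt f 0 t) {x y : ℝ} (hx : x ∈ s) (hy : y ∈ s) :
    f x = f y := by
  have hcont : ContinuousOn f s := fun t ht => (hf t ht).continuousAt.continuousWithinAt
  have hdiff : DifferentiableOn ℝ f (interior s) := fun t ht =>
    ((hf t (interior_subset ht)).differentiableAt).differentiableWithinAt
  have hderiv : ∀ t ∈ interior s, deriv f t = 0 := fun t ht =>
    (hf t (interior_subset ht)).deriv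
  have hmono := monotoneOn_of_deriv_nonneg hs hcont hdiff fun t ht => (hderiv t ht).ge
  have hanti := antitoneOn_of_deriv_nonpos hs hcont hdiff fun t ht => (hderiv t ht).le
  rcases le_total x y with h | h
  · exact le_antisymm (hmono hx hy h) (hanti hx hy h)
  · exact (le_antisymm (hmono hy hx h) (hanti hy hx h)).symm

lemma aux_vander {n : ℕ} (x w : Fin n → ℝ)
    (h : ∀ m : ℕ, ∑ i, w i * x i ^ m = 0) (v : ℝ) :
    ∑ i ∈ Finset.univ.filter (fun i => x i = v), w i = 0 := by
  classical
  set T : Finset ℝ := (Finset.univ.image x).erase v with hT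
  set P : Polynomial ℝ := ∏ u ∈ T, (Polynomial.X - Polynomial.C u) with hP
  have hsum : ∑ i, w i * P.eval (x i) = 0 := by
    have key : ∀ i : Fin n, w i * P.eval (x i)
        = ∑ m ∈ Finset.range (P.natDegree + 1), P.coeff m * (w i * x i ^ m) := by
      intro i
      rw [Polynomial.eval_eq_sum_range, Finset.mul_sum]
      exact Finset.sum_congr rfl fun m _ => by ring
    rw [Finset.sum_congr rfl fun i _ => key i, Finset.sum_comm]
    simp [← Finset.mul_sum, h]
  have hzero : ∀ i : Fin n, x i ≠ v → P.eval (x i) = 0 := by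
    intro i hne
    have hmem : x i ∈ T :=
      Finset.mem_erase.2 ⟨hne, Finset.mem_image_of_mem x (Finset.mem_univ i)⟩
    rw [hP, Polynomial.eval_prod]
    exact Finset.prod_eq_zero hmem (by simp)
  have hPv : P.eval v ≠ 0 := by
    rw [hP, Polynomial.eval_prod]
    refine Finset.prod_ne_zero_iff.2 fun u hu => ?_
    have huv : u ≠ v := Finset.ne_of_mem_erase hu
    simpa [sub_ne_zero] using huv.symm
  have hsplit := Finset.sum_filter_add_sum_filter_not Finset.univ (fun i => x i = v)
    (fun i => w i * P.eval (x i))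
  have h1 : ∑ i ∈ Finset.univ.filter (fun i => x i = v), w i * P.eval (x i)
      = (∑ i ∈ Finset.univ.filter (fun i => x i = v), w i) * P.eval v := by
    rw [Finset.sum_mul]
    exact Finset.sum_congr rfl fun i hi => by rw [(Finset.mem_filter.1 hi).2]
  have h2 : ∑ i ∈ Finset.univ.filter (fun i => ¬ x i = v), w i * P.eval (x i) = 0 :=
    Finset.sum_eq_zero fun i hi => by rw [hzero i (Finset.mem_filter.1 hi).2, mul_zero]
  rw [h1, h2, add_zero, hsum] at hsplit
  exact (mul_eq_zero.1 hsplit).resolve_right hPv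

/-- If `μ' = μ²` on `Ioc b t₁`, μ is nonvanishing there but μ b = 0, contradiction. -/
lemma aux_core {b t₁ : ℝ} (hb : b < t₁) {μ : ℝ → ℝ}
    (hd : ∀ t ∈ Set.Ioc b t₁, HasDerivAt μ ((μ t) ^ 2) t)
    (hcb : ContinuousAt μ b)
    (hne : ∀ t ∈ Set.Ioc b t₁, μ t ≠ 0)
    (h0 : μ b = 0) : False := by
  have ht₁m : t₁ ∈ Set.Ioc b t₁ := ⟨hb, le_refl _⟩
  set c : ℝ := -t₁ - (μ t₁)⁻¹ with hc
  have hg : ∀ t ∈ Set.Ioc b t₁, (μ t)⁻¹ + t = (μ t₁)⁻¹ + t₁ := by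
    intro t ht
    refine aux_const (convex_Ioc b t₁) (f := fun t => (μ t)⁻¹ + t) ?_ ht ht₁m
    intro s hs
    have h1 := ((hd s hs).inv (hne s hs)).add (hasDerivAt_id s)
    have h2 : -(μ s ^ 2) / μ s ^ 2 + 1 = 0 := by
      have : μ s ^ 2 ≠ 0 := pow_ne_zero _ (hne s hs)
      rw [neg_div, div_self this]; ring
    rwa [h2] at h1
  have key : ∀ t ∈ Set.Ioc b t₁, μ t * (t + c) = -1 := by
    intro t ht
    have h1 : (μ t)⁻¹ = -(t + c) := by
      have := hg t ht
      rw [hc]; linarith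
    have h3 := congrArg (fun z => μ t * z) h1
    simp only [mul_inv_cancel₀ (hne t ht)] at h3
    linarith [h3]
  have hcl : b ∈ closure (Set.Ioc b t₁) := by
    rw [closure_Ioc (ne_of_lt hb)]
    exact ⟨le_refl _, le_of_lt hb⟩
  have hfin := zero_at_closure (f := fun t => μ t * (t + c)) hcl key
    (hcb.mul (continuousAt_id.add continuousAt_const))
  simp only [h0, zero_mul] at hfin
  norm_num at hfin

/-- Dichotomy half: zeros propagate forward. -/
lemma aux_half {I : Set ℝ} (hIconn : I.OrdConnected) {μ : ℝ → ℝ}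
    (hd : ∀ t ∈ I, HasDerivAt μ ((μ t) ^ 2) t) {t₀ t₁ : ℝ}
    (ht₀ : t₀ ∈ I) (ht₁ : t₁ ∈ I) (hlt : t₀ < t₁)
    (h0 : μ t₀ = 0) (h1 : μ t₁ ≠ 0) : False := by
  have hIcc : Set.Icc t₀ t₁ ⊆ I := hIconn.out ht₀ ht₁
  set Z : Set ℝ := {t ∈ Set.Icc t₀ t₁ | μ t = 0} with hZ
  have hZne : Z.Nonempty := ⟨t₀, ⟨le_refl _, le_of_lt hlt⟩, h0⟩
  have hZbdd : BddAbove Z := ⟨t₁, fun t ht => ht.1.2⟩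
  set b : ℝ := sSup Z with hbdef
  have hbZ : b ∈ closure Z := csSup_mem_closure hZne hZbdd
  have hbIcc : b ∈ Set.Icc t₀ t₁ := by
    constructor
    · exact le_csSup hZbdd ⟨⟨le_refl _, le_of_lt hlt⟩, h0⟩
    · exact csSup_le hZne fun t ht => ht.1.2
  have hbI : b ∈ I := hIcc hbIcc
  have hμb : μ b = 0 :=
    zero_at_closure hbZ (fun t ht => ht.2) (hd b hbI).continuousAt
  have hblt : b < t₁ := lt_of_le_of_ne hbIcc.2 (fun h => h1 (h ▸ hμb))
  refine aux_core hblt (fun t ht => hd t (hIcc ⟨le_trans hbIcc.1 (le_of_lt ht.1), ht.2⟩))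
    (hd b hbI).continuousAt ?_ hμb
  intro t ht hμt
  have : t ∈ Z := ⟨⟨le_trans hbIcc.1 (le_of_lt ht.1), ht.2⟩, hμt⟩
  exact absurd (le_csSup hZbdd this) (not_le.2 ht.1)

/-- Full dichotomy: a zero of μ propagates everywhere. -/
lemma aux_dichotomy {I : Set ℝ} (hIconn : I.OrdConnected) {μ : ℝ → ℝ}
    (hd : ∀ t ∈ I, HasDerivAt μ ((μ t) ^ 2) t) {t₀ t₁ : ℝ}
    (ht₀ : t₀ ∈ I) (ht₁ : t₁ ∈ I) (h0 : μ t₀ = 0) : μ t₁ = 0 := by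
  by_contra h1
  rcases lt_trichotomy t₀ t₁ with h | h | h
  · exact aux_half hIconn hd ht₀ ht₁ h h0 h1
  · exact h1 (h ▸ h0)
  · set ν : ℝ → ℝ := fun t => -μ (-t) with hν
    have hIc : (Neg.neg ⁻¹' I : Set ℝ).OrdConnected := by
      constructor
      intro x hx y hy z hz
      simp only [Set.mem_preimage] at *
      exact hIconn.out hy hx ⟨neg_le_neg hz.2, neg_le_neg hz.1⟩
    have hdν : ∀ t ∈ (Neg.neg ⁻¹' I : Set ℝ), HasDerivAt ν ((ν t) ^ 2) t := by
      intro t ht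
      have h1 := (hd (-t) ht).comp t (hasDerivAt_neg t)
      have h2 := h1.neg
      have h3 : -(μ (-t) ^ 2 * -1) = (ν t) ^ 2 := by simp [hν]
      rwa [h3] at h2
    exact aux_half hIc hdν (t₀ := -t₀) (t₁ := -t₁) (by simpa using ht₀)
      (by simpa using ht₁) (by linarith) (by simp [hν, h0]) (by simp [hν, h1])

/-- Classification of solutions of the ODE system with `K = 0` and `τ ≡ 0`. -/
theorem stmt_1 (n₁ : ℕ) (hn : 1 ≤ n₁) (K : ℝ) (hK : K = 0)
    (I : Set ℝ) (hI : IsOpen I) (hIconn : I.OrdConnected)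
    (lam mu : Fin n₁ → ℝ → ℝ)
    (hlam : ∀ i, AnalyticOnNhd ℝ (lam i) I)
    (hmu : ∀ i, AnalyticOnNhd ℝ (mu i) I)
    (tau : ℝ → ℝ) (htau : ∀ t, tau t = (2/3) * ∑ i, lam i t)
    (hode1 : ∀ i, ∀ t ∈ I, HasDerivAt (lam i) ((tau t / 2 + lam i t) * mu i t) t)
    (hode2 : ∀ i, ∀ t ∈ I,
      HasDerivAt (mu i) ((mu i t) ^ 2 - tau t / 2 * lam i t + K) t)
    (hode3 : ∀ t ∈ I,
      -(deriv (deriv tau) t) + deriv tau t * (∑ i, mu i t)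
        + tau t * ((tau t) ^ 2 / 4 - ((n₁ : ℝ) + 1) * K + ∑ i, (lam i t) ^ 2) = 0)
    (htau0 : ∀ t ∈ I, tau t = 0) :
    ∃ a : Fin n₁ → ℝ,
      (∀ i,
        (∃ c : ℝ, (∀ t ∈ I, t + c ≠ 0) ∧
          (∀ t ∈ I, mu i t = -(1 / (t + c)) ∧ lam i t = a i / (t + c))) ∨
        ((∀ t ∈ I, mu i t = 0) ∧ (∀ t ∈ I, lam i t = a i))) ∧
      (∀ k : Fin n₁,
        (∑ i ∈ Finset.univ.filter (fun i => Set.EqOn (mu i) (mu k) I), a i) = 0) := by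
  rcases Set.eq_empty_or_nonempty I with hIe | ⟨t₀, ht₀⟩
  · refine ⟨fun _ => 0, fun i => Or.inr ⟨fun t ht => by simp [hIe] at ht,
      fun t ht => by simp [hIe] at ht⟩, fun k => by simp⟩
  · have hconv : Convex ℝ I := convex_iff_ordConnected.mpr hIconn
    have hmu' : ∀ i, ∀ t ∈ I, HasDerivAt (mu i) ((mu i t) ^ 2) t := by
      intro i t ht
      have h := hode2 i t ht
      rw [htau0 t ht, hK] at h
      simpa using h
    have hlam' : ∀ i, ∀ t ∈ I, HasDerivAt (lam i) (lam i t * mu i t) t := by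
      intro i t ht
      have h := hode1 i t ht
      rw [htau0 t ht] at h
      simpa using h
    have hsum0 : ∀ t ∈ I, ∑ i, lam i t = 0 := by
      intro t ht
      have h := htau t
      rw [htau0 t ht] at h
      linarith
    -- moments
    have hmom : ∀ m : ℕ, ∀ t ∈ I, ∑ i, lam i t * (mu i t) ^ m = 0 := by
      intro m
      induction m with
      | zero => intro t ht; simpa using hsum0 t ht
      | succ m ih =>
        intro t ht
        have hder : HasDerivAt (fun s => ∑ i, lam i s * (mu i s) ^ m)
            (∑ i, ((m : ℝ) + 1) * (lam i t * (mu i t) ^ (m + 1))) t := by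
          refine HasDerivAt.fun_sum fun i _ => ?_
          have h1 := (hlam' i t ht).fun_mul ((hmu' i t ht).fun_pow m)
          convert h1 using 1
          · rfl
          cases m with
          | zero => simp
          | succ k =>
            have : (k + 1 : ℕ) - 1 = k := rfl
            rw [this]
            push_cast
            ring
        have hev : (fun s => ∑ i, lam i s * (mu i s) ^ m) =ᶠ[nhds t] (fun _ => 0) :=
          Filter.eventuallyEq_of_mem (hI.mem_nhds ht) (fun s hs => ih s hs)
        have hder0 : HasDerivAt (fun s => ∑ i, lam i s * (mu i s) ^ m) 0 t :=
          (hasDerivAt_const t 0).congr_of_eventuallyEq hev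
        have huniq := hder.unique hder0
        rw [← Finset.mul_sum] at huniq
        have hm1 : ((m : ℝ) + 1) ≠ 0 := by positivity
        exact (mul_eq_zero.1 huniq).resolve_left hm1
    -- dichotomy per index
    have hdich : ∀ i, (∀ t ∈ I, mu i t = 0) ∨ (∀ t ∈ I, mu i t ≠ 0) := by
      intro i
      by_cases h : ∃ s ∈ I, mu i s = 0
      · obtain ⟨s, hs, hs0⟩ := h
        exact Or.inl fun t ht => aux_dichotomy hIconn (hmu' i) hs ht hs0
      · push_neg at h; exact Or.inr h
    -- shared inverse formula
    have hginv : ∀ i, (∀ t ∈ I, mu i t ≠ 0) →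
        ∀ t ∈ I, (mu i t)⁻¹ = (mu i t₀)⁻¹ + t₀ - t := by
      intro i hne t ht
      have hd0 : ∀ s ∈ I, HasDerivAt (fun u => (mu i u)⁻¹ + u) 0 s := by
        intro s hs
        have h1 := ((hmu' i s hs).inv (hne s hs)).add (hasDerivAt_id s)
        have h2 : -(mu i s ^ 2) / mu i s ^ 2 + 1 = 0 := by
          have : mu i s ^ 2 ≠ 0 := pow_ne_zero _ (hne s hs)
          rw [neg_div, div_self this]; ring
        rwa [h2] at h1
      have := aux_const hconv hd0 ht ht₀
      linarith
    set a : Fin n₁ → ℝ := fun i => if (∀ t ∈ I, mu i t = 0) then lam i t₀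
      else lam i t₀ * (-(mu i t₀)⁻¹) with ha
    have ha0 : ∀ i, (∀ t ∈ I, mu i t = 0) → a i = lam i t₀ := by
      intro i h
      simp only [ha]
      rw [if_pos h]
    have ha1 : ∀ i, ¬ (∀ t ∈ I, mu i t = 0) → a i = lam i t₀ * (-(mu i t₀)⁻¹) := by
      intro i h
      simp only [ha]
      rw [if_neg h]
    refine ⟨a, ?_, ?_⟩
    · intro i
      rcases hdich i with hz | hnz
      · refine Or.inr ⟨hz, ?_⟩
        intro t ht
        rw [ha0 i hz]
        have hd0 : ∀ s ∈ I, HasDerivAt (lam i) 0 s := by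
          intro s hs
          have h := hlam' i s hs
          rwa [hz s hs, mul_zero] at h
        exact aux_const hconv hd0 ht ht₀
      · refine Or.inl ?_
        have h0 : mu i t₀ ≠ 0 := hnz t₀ ht₀
        set c : ℝ := -t₀ - (mu i t₀)⁻¹ with hc
        have htc : ∀ t ∈ I, t + c = -(mu i t)⁻¹ := by
          intro t ht
          have := hginv i hnz t ht
          rw [hc]; linarith
        have htc0 : ∀ t ∈ I, t + c ≠ 0 := by
          intro t ht
          rw [htc t ht]
          simpa using inv_ne_zero (hnz t ht)
        refine ⟨c, htc0, ?_⟩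
        intro t ht
        constructor
        · rw [htc t ht]
          have := hnz t ht
          field_simp
        · have hL : ∀ s ∈ I, HasDerivAt (fun u => lam i u * (u + c)) 0 s := by
            intro s hs
            have h1 := (hlam' i s hs).mul ((hasDerivAt_id s).add_const c)
            simp only [id_eq] at h1
            have h3 : mu i s * (-(mu i s)⁻¹) = -1 := by
              rw [mul_neg, mul_inv_cancel₀ (hnz s hs)]
            have h2 : lam i s * mu i s * (s + c) + lam i s * 1 = 0 := by
              rw [htc s hs, mul_assoc, h3]; ring
            rwa [h2] at h1
          have hconst : lam i t * (t + c) = lam i t₀ * (t₀ + c) :=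
            aux_const hconv hL ht ht₀
          rw [ha1 i (fun h => h0 (h t₀ ht₀))]
          rw [eq_div_iff (htc0 t ht), hconst, htc t₀ ht₀]
    · intro k
      have hfilt : Finset.univ.filter (fun i => Set.EqOn (mu i) (mu k) I)
          = Finset.univ.filter (fun i => mu i t₀ = mu k t₀) := by
        refine Finset.filter_congr fun i _ => ?_
        constructor
        · intro h; exact h ht₀
        · intro h t ht
          rcases hdich i with hzi | hni
          · rcases hdich k with hzk | hnk
            · rw [hzi t ht, hzk t ht]
            · have hk0 : mu k t₀ = 0 := by rw [← h]; exact hzi t₀ ht₀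
              exact absurd hk0 (hnk t₀ ht₀)
          · rcases hdich k with hzk | hnk
            · have hi0 : mu i t₀ = 0 := by rw [h]; exact hzk t₀ ht₀
              exact absurd hi0 (hni t₀ ht₀)
            · have h1 := hginv i hni t ht
              have h2 := hginv k hnk t ht
              have h3 : (mu i t)⁻¹ = (mu k t)⁻¹ := by rw [h1, h2, h]
              exact inv_injective h3
      rw [hfilt]
      by_cases hv0 : mu k t₀ = 0
      · have hcong : ∀ i ∈ Finset.univ.filter (fun i => mu i t₀ = mu k t₀),
            a i = lam i t₀ := by
          intro i hi
          have hz : ∀ t ∈ I, mu i t = 0 := fun t ht =>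
            aux_dichotomy hIconn (hmu' i) ht₀ ht
              (by rw [(Finset.mem_filter.1 hi).2, hv0])
          exact ha0 i hz
        rw [Finset.sum_congr rfl hcong]
        exact aux_vander (fun i => mu i t₀) (fun i => lam i t₀)
          (fun m => hmom m t₀ ht₀) (mu k t₀)
      · have hcong : ∀ i ∈ Finset.univ.filter (fun i => mu i t₀ = mu k t₀),
            a i = lam i t₀ * (-(mu k t₀)⁻¹) := by
          intro i hi
          have hiv := (Finset.mem_filter.1 hi).2
          have hnall : ¬ (∀ t ∈ I, mu i t = 0) := fun h =>
            hv0 (by rw [← hiv, h t₀ ht₀])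
          rw [ha1 i hnall, hiv]
        rw [Finset.sum_congr rfl hcong, ← Finset.sum_mul,
          aux_vander (fun i => mu i t₀) (fun i => lam i t₀)
            (fun m => hmom m t₀ ht₀) (mu k t₀), zero_mul]
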